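/- Let X be a finite type, J : X → X an involution with no fixed points, x : X → ℝ with x(J e) = x(e) for all e, and φ : X → ℂ with φ(e) ≠ 0 and φ(J e) = φ(e)⁻¹ for all e. Let M be the X-by-X complex matrix with M_{e,e'} = i·φ(e)·x(e) if e' = J(e) and M_{e,e'} = 0 otherwise. Then det(1 + M) = ∏_{O} (1 + x(e_O)²), where the product ranges over all orbits O = {e_O, J(e_O)} of J on X. -/

import Mathlib

/-- Let `J` be a fixed-point-free involution of a finite type `X`, `x` a real
weight invariant under `J`, and `φ` a non-vanishing complex function with
`φ(J e) = φ(e)⁻¹`.  If `M` is the matrix with `M_{e, J e} = i·φ(e)·x(e)` and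
zero entries otherwise, then `det(1 + M)` is the product over the orbits
`O = {e, J e}` of `J` of `1 + x(e_O)²`, for any choice of representatives. -/
theorem det_one_add_involution_matrix {X : Type*} [Fintype X] [DecidableEq X]
    (J : X → X) (hJinv : Function.Involutive J) (hJfp : ∀ e, J e ≠ e)
    (x : X → ℝ) (hx : ∀ e, x (J e) = x e)
    (φ : X → ℂ) (hφ0 : ∀ e, φ e ≠ 0) (hφ : ∀ e, φ (J e) = (φ e)⁻¹)
    (M : Matrix X X ℂ)
    (hM : ∀ e e', M e e' = if e' = J e then Complex.I * φ e * x e else 0)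
    (rep : Finset X → X)
    (hrep : ∀ O ∈ Finset.univ.image (fun e => ({e, J e} : Finset X)), rep O ∈ O) :
    Matrix.det (1 + M) =
      ∏ O ∈ Finset.univ.image (fun e => ({e, J e} : Finset X)),
        (1 + ((x (rep O) : ℂ)) ^ 2) := by
  classical
  set Os := Finset.univ.image (fun e => ({e, J e} : Finset X)) with hOs
  have hmem : ∀ e : X, ({e, J e} : Finset X) ∈ Os := fun e =>
    Finset.mem_image_of_mem _ (Finset.mem_univ e)
  have horb : ∀ O ∈ Os, ∀ u ∈ O, ({u, J u} : Finset X) = O := by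
    intro O hO u hu
    obtain ⟨e, -, rfl⟩ := Finset.mem_image.mp hO
    rcases Finset.mem_insert.mp hu with rfl | hu
    · rfl
    · rw [Finset.mem_singleton] at hu; subst hu
      rw [hJinv e]; exact Finset.pair_comm _ _
  have hrep' : ∀ e : X, rep {e, J e} = e ∨ rep {e, J e} = J e := by
    intro e
    have := hrep _ (hmem e)
    simpa using this
  -- the equivalence
  let g : Fin 2 × {O // O ∈ Os} → X := fun p =>
    if p.1 = 0 then rep p.2.1 else J (rep p.2.1)
  let f : X → Fin 2 × {O // O ∈ Os} := fun e =>
    (if e = rep {e, J e} then 0 else 1, ⟨{e, J e}, hmem e⟩)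
  have hgmem : ∀ p, g p ∈ p.2.1 := by
    rintro ⟨i, O, hO⟩
    by_cases h : i = 0
    · simpa [g, h] using hrep _ hO
    · have h2 := horb _ hO _ (hrep _ hO)
      simp only [g, h, if_false]
      have hm : J (rep O) ∈ ({rep O, J (rep O)} : Finset X) := by simp
      rw [h2] at hm
      exact hm
  have hleft : Function.LeftInverse g f := by
    intro e
    show (if (if e = rep {e, J e} then (0 : Fin 2) else 1) = 0
        then rep {e, J e} else J (rep {e, J e})) = e
    rcases hrep' e with h | h
    · rw [if_pos h.symm, if_pos rfl]; exact h
    · have hne : e ≠ rep {e, J e} := by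
        rw [h]; exact fun he => hJfp e he.symm
      rw [if_neg hne, if_neg (by decide : (1 : Fin 2) ≠ 0), h, hJinv e]
  have hright : Function.RightInverse g f := by
    rintro ⟨i, O, hO⟩
    have hO1 : ({rep O, J (rep O)} : Finset X) = O := horb _ hO _ (hrep _ hO)
    by_cases hi : i = 0
    · subst hi
      have hg0 : g (0, ⟨O, hO⟩) = rep O := by simp [g]
      rw [hg0]
      show ((if rep O = rep {rep O, J (rep O)} then (0 : Fin 2) else 1),
          (⟨{rep O, J (rep O)}, hmem (rep O)⟩ : {O // O ∈ Os})) = (0, ⟨O, hO⟩)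
      have hrw : rep {rep O, J (rep O)} = rep O := by rw [hO1]
      rw [hrw, if_pos rfl]
      exact Prod.ext rfl (Subtype.ext hO1)
    · have hi1 : i = 1 := by omega
      subst hi1
      have hg1 : g (1, ⟨O, hO⟩) = J (rep O) := by simp [g]
      rw [hg1]
      have h2 : ({J (rep O), J (J (rep O))} : Finset X) = O := by
        rw [hJinv (rep O), Finset.pair_comm]; exact hO1
      show ((if J (rep O) = rep {J (rep O), J (J (rep O))} then (0 : Fin 2) else 1),
          (⟨{J (rep O), J (J (rep O))}, hmem (J (rep O))⟩ : {O // O ∈ Os})) = (1, ⟨O, hO⟩)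
      have hrw : rep {J (rep O), J (J (rep O))} = rep O := by rw [h2]
      rw [hrw, if_neg (hJfp (rep O))]
      exact Prod.ext rfl (Subtype.ext h2)
  let eqv : (Fin 2 × {O // O ∈ Os}) ≃ X := ⟨g, f, hright, hleft⟩
  have key : (1 + M).submatrix eqv eqv = Matrix.blockDiagonal
      (fun O : {O // O ∈ Os} =>
        !![1, Complex.I * φ (rep O.1) * x (rep O.1);
           Complex.I * φ (J (rep O.1)) * x (J (rep O.1)), 1]) := by
    ext ⟨i, O⟩ ⟨j, O'⟩
    rw [Matrix.blockDiagonal_apply]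
    by_cases hOO : O = O'
    · subst hOO
      rw [if_pos rfl]
      have hr : J (rep O.1) ≠ rep O.1 := hJfp _
      have hrr : J (J (rep O.1)) = rep O.1 := hJinv _
      fin_cases i <;> fin_cases j <;>
        simp [eqv, g, Matrix.submatrix_apply, Matrix.add_apply, Matrix.one_apply, hM,
          hr, hr.symm, hrr]
    · rw [if_neg hOO]
      set a := eqv (i, O) with ha
      set b := eqv (j, O') with hb
      have hOa : ({a, J a} : Finset X) = O.1 := horb _ O.2 _ (hgmem (i, O))
      have hOb : ({b, J b} : Finset X) = O'.1 := horb _ O'.2 _ (hgmem (j, O'))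
      have hba : b ≠ a := by
        intro h
        exact hOO (Subtype.ext (by rw [← hOa, ← hOb, h]))
      have hbJa : b ≠ J a := by
        intro h
        apply hOO
        refine Subtype.ext ?_
        rw [← hOa, ← hOb, h, hJinv a, Finset.pair_comm]
      simp only [Matrix.submatrix_apply, Matrix.add_apply, Matrix.one_apply, hM,
        if_neg hba, if_neg hbJa]
      norm_num
      rw [if_neg (fun h => hOO h.2), if_neg (show ¬ eqv (j, O') = J (eqv (i, O)) from hbJa), add_zero]
  have hdet2 : ∀ O : {O // O ∈ Os},
      (!![1, Complex.I * φ (rep O.1) * x (rep O.1);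
           Complex.I * φ (J (rep O.1)) * x (J (rep O.1)), 1]).det
        = 1 + ((x (rep O.1) : ℂ)) ^ 2 := by
    intro O
    rw [Matrix.det_fin_two_of, hφ, hx]
    have h0 := hφ0 (rep O.1)
    field_simp
    ring_nf
    rw [Complex.I_sq]
    ring
  calc Matrix.det (1 + M)
      = ((1 + M).submatrix eqv eqv).det := (Matrix.det_submatrix_equiv_self eqv (1 + M)).symm
    _ = ∏ O : {O // O ∈ Os}, (1 + ((x (rep O.1) : ℂ)) ^ 2) := by
        rw [key, Matrix.det_blockDiagonal]
        exact Finset.prod_congr rfl fun O _ => hdet2 O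
    _ = ∏ O ∈ Os, (1 + ((x (rep O) : ℂ)) ^ 2) := Finset.prod_coe_sort Os (fun O => 1 + ((x (rep O) : ℂ)) ^ 2)
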